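/- The function f : (0,∞) → ℝ defined by f(x) = (1/(σ²(n−m)))[m ∫₀ˣ s^{−m−1} h(s) ds + n x^{n−m} ∫ₓ^∞ s^{−n−1} h(s) ds] (that is, f(x) = x^{1−m} R_h'(x)) is strictly increasing on (0,∞). -/

import Mathlib

open MeasureTheory Set Filter Topology

set_option linter.unusedVariables false

/-- `h(0) := lim_{x↓0} h(x) ∈ [-∞, ∞)`; for a right-continuous increasing `h` this is the
infimum of `h` over `(0, ∞)`, viewed in the extended reals. -/
noncomputable def hZero (h : ℝ → ℝ) : EReal := ⨅ x ∈ Set.Ioi (0 : ℝ), (h x : EReal)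

/-- The particular solution `R_h` to the ODE `σ²x²w'' + bxw' - rw + h = 0`. -/
noncomputable def Rh (σ m n : ℝ) (h : ℝ → ℝ) (x : ℝ) : ℝ :=
  (1 / (σ ^ 2 * (n - m))) *
    (x ^ m * (∫ s in Set.Ioc (0 : ℝ) x, s ^ (-m - 1) * h s)
      + x ^ n * ∫ s in Set.Ioi x, s ^ (-n - 1) * h s)


theorem statement_4
    (r b σ m n : ℝ) (h : ℝ → ℝ)
    (hr : 0 < r) (hσ : σ ≠ 0) (hm : m < 0) (hn : 0 < n)
    (hmRoot : σ ^ 2 * m ^ 2 + (b - σ ^ 2) * m - r = 0)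
    (hnRoot : σ ^ 2 * n ^ 2 + (b - σ ^ 2) * n - r = 0)
    (hMono : MonotoneOn h (Set.Ioi 0))
    (hRC : ∀ x : ℝ, 0 < x → ContinuousWithinAt h (Set.Ici x) x)
    (hTop : Tendsto h atTop atTop)
    (hIntZero : ∀ x : ℝ, 0 < x →
      IntegrableOn (fun s : ℝ => s ^ (-m - 1) * h s) (Set.Ioc 0 x))
    (hIntTop : ∀ x : ℝ, 0 < x →
      IntegrableOn (fun s : ℝ => s ^ (-n - 1) * h s) (Set.Ioi x))
    :
    StrictMonoOn (fun x : ℝ =>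
      (1 / (σ ^ 2 * (n - m))) *
        (m * (∫ s in Set.Ioc (0 : ℝ) x, s ^ (-m - 1) * h s)
          + n * x ^ (n - m) * ∫ s in Set.Ioi x, s ^ (-n - 1) * h s)) (Set.Ioi 0) := by
  intro x hx y hy hxy
  simp only [mem_Ioi] at hx hy
  simp only []
  have hnm : m < n := hm.trans hn
  have hm' : m ≠ 0 := ne_of_lt hm
  have hn' : n ≠ 0 := ne_of_gt hn
  set u := x ^ (n - m) with hu
  set v := y ^ (n - m) with hv
  have hu0 : 0 < u := Real.rpow_pos_of_pos hx _
  have hv0 : 0 < v := Real.rpow_pos_of_pos hy _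
  have huv : u < v := Real.rpow_lt_rpow hx.le hxy (by linarith)
  have hux : u * x ^ (-n) = x ^ (-m) := by
    rw [hu, ← Real.rpow_add hx, show (n - m) + (-n) = -m by ring]
  have hvy : v * y ^ (-n) = y ^ (-m) := by
    rw [hv, ← Real.rpow_add hy, show (n - m) + (-n) = -m by ring]
  -- integrability facts
  have hcontm : IntegrableOn (fun s : ℝ => s ^ (-m - 1)) (Ioc x y) := by
    refine (ContinuousOn.integrableOn_Icc ?_).mono_set Ioc_subset_Icc_self
    intro s hs
    exact (Real.continuousAt_rpow_const s _
      (Or.inl (ne_of_gt (lt_of_lt_of_le hx hs.1)))).continuousWithinAt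
  have hcontn : IntegrableOn (fun s : ℝ => s ^ (-n - 1)) (Ioc x y) := by
    refine (ContinuousOn.integrableOn_Icc ?_).mono_set Ioc_subset_Icc_self
    intro s hs
    exact (Real.continuousAt_rpow_const s _
      (Or.inl (ne_of_gt (lt_of_lt_of_le hx hs.1)))).continuousWithinAt
  have hRny : IntegrableOn (fun t : ℝ => t ^ (-n - 1)) (Ioi y) :=
    integrableOn_Ioi_rpow_of_lt (by linarith) hy
  have hA1 := hIntZero x hx
  have hAy := hIntZero y hy
  have hA2 : IntegrableOn (fun s : ℝ => s ^ (-m - 1) * h s) (Ioc x y) :=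
    hAy.mono_set (Ioc_subset_Ioc_left hx.le)
  have hBx := hIntTop x hx
  have hB3 := hIntTop y hy
  have hB2 : IntegrableOn (fun s : ℝ => s ^ (-n - 1) * h s) (Ioc x y) :=
    hBx.mono_set Ioc_subset_Ioi_self
  -- splitting integrals
  have split1 : (∫ s in Ioc (0 : ℝ) y, s ^ (-m - 1) * h s)
      = (∫ s in Ioc (0 : ℝ) x, s ^ (-m - 1) * h s) + ∫ s in Ioc x y, s ^ (-m - 1) * h s := by
    rw [← Ioc_union_Ioc_eq_Ioc hx.le hxy.le,
      setIntegral_union (Ioc_disjoint_Ioc_of_le le_rfl) measurableSet_Ioc hA1 hA2]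
  have split2 : (∫ s in Ioi x, s ^ (-n - 1) * h s)
      = (∫ s in Ioc x y, s ^ (-n - 1) * h s) + ∫ s in Ioi y, s ^ (-n - 1) * h s := by
    rw [← Ioc_union_Ioi_eq_Ioi hxy.le,
      setIntegral_union Ioc_disjoint_Ioi_same measurableSet_Ioi hB2 hB3]
  -- explicit values of the kernel integrals
  have eqm : (∫ s in Ioc x y, s ^ (-m - 1)) = (y ^ (-m) - x ^ (-m)) / (-m) := by
    rw [← intervalIntegral.integral_of_le hxy.le,
      integral_rpow
        (Or.inr ⟨by intro hh; exact hm' (by linarith), notMem_uIcc_of_lt hx hy⟩),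
      show -m - 1 + 1 = -m by ring]
  have eqn : (∫ s in Ioc x y, s ^ (-n - 1)) = (y ^ (-n) - x ^ (-n)) / (-n) := by
    rw [← intervalIntegral.integral_of_le hxy.le,
      integral_rpow
        (Or.inr ⟨by intro hh; exact hn' (by linarith), notMem_uIcc_of_lt hx hy⟩),
      show -n - 1 + 1 = -n by ring]
  have hdiv : ∀ c : ℝ, c ≠ 0 → ∀ a : ℝ, c * (a / -c) = -a := fun c hc a => by
    rw [div_neg, mul_neg, ← mul_div_assoc, mul_div_cancel_left₀ _ hc]
  have eqm' : m * ∫ s in Ioc x y, s ^ (-m - 1) = x ^ (-m) - y ^ (-m) := by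
    rw [eqm, hdiv m hm']; ring
  have eqn' : (n * u) * ∫ s in Ioc x y, s ^ (-n - 1) = x ^ (-m) - u * y ^ (-n) := by
    rw [eqn, ← hux,
      show n * u * ((y ^ (-n) - x ^ (-n)) / -n) = u * (n * ((y ^ (-n) - x ^ (-n)) / -n)) from by
        ring,
      hdiv n hn']
    ring
  have eqB : (∫ t in Ioi y, t ^ (-n - 1)) = y ^ (-n) / n := by
    rw [integral_Ioi_rpow_of_lt (by linarith) hy, show -n - 1 + 1 = -n by ring, neg_div_neg_eq]
  -- value of P
  have hPval : (∫ s in Ioc x y, (m * s ^ (-m - 1) - n * u * s ^ (-n - 1)) * (h s - h y))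
      = m * (∫ s in Ioc x y, s ^ (-m - 1) * h s)
        - n * u * (∫ s in Ioc x y, s ^ (-n - 1) * h s)
        - h y * (u * y ^ (-n) - y ^ (-m)) := by
    have e : (fun s : ℝ => (m * s ^ (-m - 1) - n * u * s ^ (-n - 1)) * (h s - h y))
        = fun s : ℝ => (m * (s ^ (-m - 1) * h s) - (n * u) * (s ^ (-n - 1) * h s))
          - ((h y * m) * s ^ (-m - 1) - (h y * (n * u)) * s ^ (-n - 1)) :=
      funext fun s => by ring
    have hI1 : IntegrableOn
        (fun s : ℝ => m * (s ^ (-m - 1) * h s) - n * u * (s ^ (-n - 1) * h s)) (Ioc x y) :=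
      (hA2.const_mul m).sub (hB2.const_mul (n * u))
    have hI2 : IntegrableOn
        (fun s : ℝ => h y * m * s ^ (-m - 1) - h y * (n * u) * s ^ (-n - 1)) (Ioc x y) :=
      (hcontm.const_mul (h y * m)).sub (hcontn.const_mul (h y * (n * u)))
    rw [e, integral_sub hI1 hI2,
      integral_sub (hA2.const_mul m) (hB2.const_mul (n * u)),
      integral_sub (hcontm.const_mul (h y * m)) (hcontn.const_mul (h y * (n * u))),
      integral_const_mul, integral_const_mul, integral_const_mul, integral_const_mul]
    have t1 : (h y * m) * ∫ s in Ioc x y, s ^ (-m - 1) = h y * (x ^ (-m) - y ^ (-m)) := by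
      rw [mul_assoc, eqm']
    have t2 : (h y * (n * u)) * ∫ s in Ioc x y, s ^ (-n - 1)
        = h y * (x ^ (-m) - u * y ^ (-n)) := by rw [mul_assoc, eqn']
    rw [t1, t2]; ring
  -- value of Q
  have e2 : (fun t : ℝ => (n * (v - u) * t ^ (-n - 1)) * (h t - h y))
      = fun t : ℝ => (n * (v - u)) * (t ^ (-n - 1) * h t)
        - (h y * (n * (v - u))) * t ^ (-n - 1) := funext fun t => by ring
  have hQval : (∫ t in Ioi y, (n * (v - u) * t ^ (-n - 1)) * (h t - h y))
      = n * (v - u) * (∫ t in Ioi y, t ^ (-n - 1) * h t)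
        - h y * (y ^ (-m) - u * y ^ (-n)) := by
    rw [e2, integral_sub (hB3.const_mul _) (hRny.const_mul _),
      integral_const_mul, integral_const_mul, eqB]
    have hdiv2 : n * (y ^ (-n) / n) = y ^ (-n) := by
      rw [← mul_div_assoc, mul_div_cancel_left₀ _ hn']
    have t3 : h y * (n * (v - u)) * (y ^ (-n) / n) = h y * (y ^ (-m) - u * y ^ (-n)) := by
      rw [← hvy,
        show h y * (n * (v - u)) * (y ^ (-n) / n) = (h y * (v - u)) * (n * (y ^ (-n) / n)) from by
          ring,
        hdiv2]
      ring
    rw [t3]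
  -- P is nonnegative
  have hP0 : 0 ≤ ∫ s in Ioc x y, (m * s ^ (-m - 1) - n * u * s ^ (-n - 1)) * (h s - h y) := by
    refine setIntegral_nonneg measurableSet_Ioc fun s hs => ?_
    have hs0 : 0 < s := hx.trans hs.1
    have p1 : 0 < s ^ (-m - 1) := Real.rpow_pos_of_pos hs0 _
    have p2 : 0 < s ^ (-n - 1) := Real.rpow_pos_of_pos hs0 _
    have k1 : m * s ^ (-m - 1) - n * u * s ^ (-n - 1) ≤ 0 := by
      have q1 := mul_neg_of_neg_of_pos hm p1
      have q2 := mul_pos (mul_pos hn hu0) p2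
      linarith
    have k2 : h s - h y ≤ 0 := sub_nonpos.2 (hMono (mem_Ioi.2 hs0) (mem_Ioi.2 hy) hs.2)
    have h0 : (m * s ^ (-m - 1) - n * u * s ^ (-n - 1)) * (h s - h y)
        = (-(m * s ^ (-m - 1) - n * u * s ^ (-n - 1))) * (-(h s - h y)) := by ring
    rw [h0]
    exact mul_nonneg (by linarith) (by linarith)
  -- Q is positive
  have hcst : 0 < n * (v - u) := mul_pos hn (by linarith)
  have hg : IntegrableOn (fun t : ℝ => (n * (v - u) * t ^ (-n - 1)) * (h t - h y)) (Ioi y) := by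
    rw [e2]; exact (hB3.const_mul _).sub (hRny.const_mul _)
  obtain ⟨T0, hT0⟩ := eventually_atTop.mp (hTop.eventually_ge_atTop (h y + 1))
  set T := max T0 (y + 1) with hT
  have hTy : y < T := lt_of_lt_of_le (by linarith) (le_max_right _ _)
  have hT0' : 0 < T := hy.trans hTy
  have qsplit : (∫ t in Ioi y, (n * (v - u) * t ^ (-n - 1)) * (h t - h y))
      = (∫ t in Ioc y T, (n * (v - u) * t ^ (-n - 1)) * (h t - h y))
        + ∫ t in Ioi T, (n * (v - u) * t ^ (-n - 1)) * (h t - h y) := by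
    rw [← Ioc_union_Ioi_eq_Ioi hTy.le,
      setIntegral_union Ioc_disjoint_Ioi_same measurableSet_Ioi
        (hg.mono_set Ioc_subset_Ioi_self) (hg.mono_set (Ioi_subset_Ioi hTy.le))]
  have q1 : 0 ≤ ∫ t in Ioc y T, (n * (v - u) * t ^ (-n - 1)) * (h t - h y) := by
    refine setIntegral_nonneg measurableSet_Ioc fun t ht => ?_
    have ht0 : 0 < t := hy.trans ht.1
    have p1 : 0 < t ^ (-n - 1) := Real.rpow_pos_of_pos ht0 _
    have k2 : 0 ≤ h t - h y := sub_nonneg.2 (hMono (mem_Ioi.2 hy) (mem_Ioi.2 ht0) ht.1.le)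
    have : 0 ≤ n * (v - u) * t ^ (-n - 1) := mul_nonneg hcst.le p1.le
    exact mul_nonneg this k2
  have hRnT : IntegrableOn (fun t : ℝ => t ^ (-n - 1)) (Ioi T) :=
    integrableOn_Ioi_rpow_of_lt (by linarith) hT0'
  have base : (∫ t in Ioi T, n * (v - u) * t ^ (-n - 1)) = n * (v - u) * (T ^ (-n) / n) := by
    rw [integral_const_mul, integral_Ioi_rpow_of_lt (by linarith) hT0',
      show -n - 1 + 1 = -n by ring, neg_div_neg_eq]
  have posbase : 0 < n * (v - u) * (T ^ (-n) / n) :=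
    mul_pos hcst (div_pos (Real.rpow_pos_of_pos hT0' _) hn)
  have mono : (∫ t in Ioi T, n * (v - u) * t ^ (-n - 1))
      ≤ ∫ t in Ioi T, (n * (v - u) * t ^ (-n - 1)) * (h t - h y) := by
    refine setIntegral_mono_on (hRnT.const_mul _) (hg.mono_set (Ioi_subset_Ioi hTy.le))
      measurableSet_Ioi fun t ht => ?_
    have ht' : T < t := ht
    have h1 : (1 : ℝ) ≤ h t - h y := by
      have := hT0 t (le_trans (le_max_left _ _) ht'.le)
      linarith
    have h2 : 0 ≤ n * (v - u) * t ^ (-n - 1) :=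
      mul_nonneg hcst.le (Real.rpow_pos_of_pos (hT0'.trans ht') _).le
    exact le_mul_of_one_le_right h2 h1
  have hQpos : 0 < ∫ t in Ioi y, (n * (v - u) * t ^ (-n - 1)) * (h t - h y) := by
    rw [qsplit]; linarith
  -- conclude
  have hσ2 : 0 < σ ^ 2 := by positivity
  have hc : 0 < 1 / (σ ^ 2 * (n - m)) := one_div_pos.mpr (mul_pos hσ2 (by linarith))
  refine (mul_lt_mul_iff_right₀ hc).2 ?_
  rw [split1, split2]
  linarith [hP0, hQpos, hPval, hQval]
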